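/- Fix 0 < p < 1 and let n ≥ k ≥ 2 be powers of 2 with k = 2^h. For a uniformly random choice of i₁ < … < i_h ∈ [log₂ n] and f = f^↓ ∘ F_{i_h} ∘ … ∘ F_{i_1}, any fixed subset Q ⊆ {0,…,n−1} with |Q| ≤ p·C(log₂ n, h) contains a length-k increasing subsequence of f with probability strictly less than p. -/

import Mathlib

open scoped Classical
open Finset

namespace Stmt19Aux

def dsz (x y : ℕ) : ℕ := Nat.size (x ^^^ y)

noncomputable def Caught (Q J : Finset ℕ) : Prop :=
  ∃ x : ℕ → ℕ, (∀ t < 2 ^ J.card, x t ∈ Q) ∧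
    ∀ t, t + 1 < 2 ^ J.card → x t < x (t + 1) ∧ dsz (x t) (x (t + 1)) ∈ J

lemma dsz_pos {x y : ℕ} (h : x ≠ y) : 1 ≤ dsz x y := by
  have h0 : x ^^^ y ≠ 0 := fun h0 => h (by have := congrArg (· ^^^ y) h0; simpa [Nat.xor_assoc, Nat.xor_self] using this)
  exact Nat.size_pos.mpr (Nat.pos_of_ne_zero h0)

lemma testBit_true_of_bounds {u j : ℕ} (h1 : 2 ^ j ≤ u) (h2 : u < 2 ^ (j + 1)) :
    u.testBit j = true := by
  rw [Nat.testBit_eq_decide_div_mod_eq]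
  have hdiv : u / 2 ^ j = 1 := by
    apply Nat.div_eq_of_lt_le (by simpa using h1)
    rw [pow_succ] at h2; omega
  simp [hdiv]

lemma lt_two_pow_of_testBit_false {u j : ℕ} (h2 : u < 2 ^ (j + 1)) (h : u.testBit j = false) :
    u < 2 ^ j := by
  by_contra hge
  push_neg at hge
  rw [testBit_true_of_bounds hge h2] at h
  exact Bool.noConfusion h

lemma eq_testBit_of_xor_lt {x y j : ℕ} (h : x ^^^ y < 2 ^ j) :
    ∀ i, j ≤ i → x.testBit i = y.testBit i := by
  intro i hi
  have hf : (x ^^^ y).testBit i = false :=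
    Nat.testBit_lt_two_pow (lt_of_lt_of_le h (Nat.pow_le_pow_right (by norm_num) hi))
  rw [Nat.testBit_xor] at hf
  revert hf
  cases x.testBit i <;> cases y.testBit i <;> simp

lemma xor_mid (x y z : ℕ) : (x ^^^ y) ^^^ (y ^^^ z) = x ^^^ z := by
  rw [Nat.xor_assoc, ← Nat.xor_assoc y y z, Nat.xor_self, Nat.zero_xor]

lemma msb_spec {x y : ℕ} (hxy : x < y) :
    ∃ j, dsz x y = j + 1 ∧ x.testBit j = false ∧ y.testBit j = true ∧
      ∀ i, j < i → x.testBit i = y.testBit i := by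
  have hne : x ^^^ y ≠ 0 := fun h0 => (Nat.ne_of_lt hxy) (by have := congrArg (· ^^^ y) h0; simpa [Nat.xor_assoc, Nat.xor_self] using this)
  have h1 : 1 ≤ (x ^^^ y).size := Nat.size_pos.mpr (Nat.pos_of_ne_zero hne)
  obtain ⟨j, hj⟩ : ∃ j, (x ^^^ y).size = j + 1 := ⟨(x ^^^ y).size - 1, by omega⟩
  have hub : x ^^^ y < 2 ^ (j + 1) := Nat.size_le.mp (le_of_eq hj)
  have hlb : 2 ^ j ≤ x ^^^ y := Nat.lt_size.mp (by omega)
  have htb : (x ^^^ y).testBit j = true := testBit_true_of_bounds hlb hub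
  have hagree : ∀ i, j < i → x.testBit i = y.testBit i := fun i hi =>
    eq_testBit_of_xor_lt hub i hi
  have hdiff : x.testBit j ≠ y.testBit j := by
    rw [Nat.testBit_xor] at htb
    intro he
    rw [he] at htb
    simp at htb
  cases hx : x.testBit j with
  | false =>
    refine ⟨j, hj, hx, ?_, hagree⟩
    cases hy : y.testBit j with
    | false => exact absurd (hx.trans hy.symm) hdiff
    | true => rfl
  | true =>
    exfalso
    cases hy : y.testBit j with
    | false =>
      have : y < x := Nat.lt_of_testBit j hy hx (fun i hi => (hagree i hi).symm)
      omega
    | true => exact hdiff (hx.trans hy.symm)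

lemma xor_chain (x : ℕ → ℕ) (e : ℕ) {a b : ℕ} (hab : a ≤ b)
    (hc : ∀ r, a ≤ r → r + 1 ≤ b → x r ^^^ x (r + 1) < 2 ^ e) :
    x a ^^^ x b < 2 ^ e := by
  induction b, hab using Nat.le_induction with
  | base => rw [Nat.xor_self]; exact Nat.two_pow_pos e
  | succ b hab ih =>
    have h1 : x a ^^^ x b < 2 ^ e := ih (fun r hr hrb => hc r hr (by omega))
    have h2 : x b ^^^ x (b + 1) < 2 ^ e := hc b hab le_rfl
    have hre : x a ^^^ x (b + 1) = (x a ^^^ x b) ^^^ (x b ^^^ x (b + 1)) := (xor_mid _ _ _).symm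
    rw [hre]
    exact Nat.xor_lt_two_pow h1 h2

lemma chain_mono (x : ℕ → ℕ) (L : ℕ) (hx : ∀ t, t + 1 < L → x t < x (t + 1)) :
    ∀ s t, s < t → t < L → x s < x t := by
  intro s t
  induction t with
  | zero => omega
  | succ t ih =>
    intro hst htL
    rcases Nat.lt_succ_iff_lt_or_eq.mp hst with hlt | heq
    · exact lt_trans (ih hlt (by omega)) (hx t htL)
    · rw [heq]; exact hx t htL

lemma ruler : ∀ (n : ℕ) (J : Finset ℕ), J.card = n → ∀ (x : ℕ → ℕ) (L : ℕ),
    (∀ t, t + 1 < L → x t < x (t + 1) ∧ dsz (x t) (x (t + 1)) ∈ J) → L ≤ 2 ^ n := by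
  intro n
  induction n with
  | zero =>
    intro J hJ x L hchain
    by_contra hc
    push_neg at hc
    have := (hchain 0 (by omega)).2
    rw [card_eq_zero.mp hJ] at this
    simp at this
  | succ n ih =>
    intro J hJ x L hchain
    by_cases hL2 : L ≤ 1
    · exact le_trans hL2 (Nat.one_le_two_pow)
    push_neg at hL2
    have hJne : J.Nonempty := ⟨dsz (x 0) (x 1), (hchain 0 (by omega)).2⟩
    set δ := J.max' hJne with hδ
    have hδJ : δ ∈ J := J.max'_mem hJne
    have hle : ∀ e ∈ J, e ≤ δ := fun e he => le_max' _ _ he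
    set T := (range (L - 1)).filter (fun t => dsz (x t) (x (t + 1)) = δ) with hT
    have hTmem : ∀ t, t ∈ T ↔ (t + 1 < L ∧ dsz (x t) (x (t + 1)) = δ) := by
      intro t; simp only [hT, mem_filter, mem_range]; omega
    have hTcard : T.card ≤ 1 := by
      by_contra hc
      push_neg at hc
      have hTne : T.Nonempty := card_pos.mp (by omega)
      set t := T.min' hTne with ht
      have htT : t ∈ T := T.min'_mem hTne
      have hTene : (T.erase t).Nonempty := card_pos.mp (by rw [card_erase_of_mem htT]; omega)
      set s := (T.erase t).min' hTene with hs
      have hsT' : s ∈ T.erase t := (T.erase t).min'_mem hTene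
      have hsT : s ∈ T := mem_of_mem_erase hsT'
      have hts : t < s := lt_of_le_of_ne (T.min'_le s hsT) (Ne.symm (ne_of_mem_erase hsT'))
      have hbet : ∀ r, t < r → r < s → r ∉ T := by
        intro r h1 h2 hr
        have := (T.erase t).min'_le r (mem_erase.mpr ⟨by omega, hr⟩)
        omega
      obtain ⟨t1L, ht1⟩ := (hTmem t).mp htT
      obtain ⟨s1L, hs1⟩ := (hTmem s).mp hsT
      have hδ1 : 1 ≤ δ := ht1 ▸ dsz_pos (ne_of_lt (hchain t t1L).1)
      obtain ⟨j, hjδ⟩ : ∃ j, δ = j + 1 := ⟨δ - 1, by omega⟩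
      obtain ⟨j1, hj1, _, hxt2, _⟩ := msb_spec (hchain t t1L).1
      have hj1j : j1 = j := by omega
      obtain ⟨j2, hj2, hxs1, _, _⟩ := msb_spec (hchain s s1L).1
      have hj2j : j2 = j := by omega
      have hbt : (x (t + 1)).testBit j = true := hj1j ▸ hxt2
      have hbs : (x s).testBit j = false := hj2j ▸ hxs1
      have ht1s : t + 1 = s ∨ t + 1 < s := by omega
      rcases ht1s with he | hlt
      · rw [he] at hbt; rw [hbt] at hbs; exact Bool.noConfusion hbs
      · have hchainlt : x (t + 1) ^^^ x s < 2 ^ j := by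
          apply xor_chain x j (le_of_lt hlt)
          intro r h1 h2
          have hsL : s + 1 < L := s1L
          have hrL : r + 1 < L := by omega
          have hrd := (hchain r hrL).2
          have hrT : r ∉ T := hbet r (by omega) (by omega)
          have hne : dsz (x r) (x (r + 1)) ≠ δ := fun hh => hrT ((hTmem r).mpr ⟨hrL, hh⟩)
          have hlt' : dsz (x r) (x (r + 1)) ≤ j := by have := hle _ hrd; omega
          exact Nat.size_le.mp hlt'
        have heq := eq_testBit_of_xor_lt hchainlt j le_rfl
        rw [hbt, hbs] at heq
        exact Bool.noConfusion heq
    have hcd : (J.erase δ).card = n := by rw [card_erase_of_mem hδJ, hJ]; omega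
    have hpow : 2 ^ (n + 1) = 2 ^ n + 2 ^ n := by rw [pow_succ]; ring
    rcases Nat.le_one_iff_eq_zero_or_eq_one.mp hTcard with h0 | h1
    · have hTe : T = ∅ := card_eq_zero.mp h0
      have hchain' : ∀ t, t + 1 < L → x t < x (t + 1) ∧ dsz (x t) (x (t + 1)) ∈ J.erase δ := by
        intro t htL
        refine ⟨(hchain t htL).1, mem_erase.mpr ⟨?_, (hchain t htL).2⟩⟩
        intro hh
        have : t ∈ T := (hTmem t).mpr ⟨htL, hh⟩
        rw [hTe] at this
        simp at this
      have := ih (J.erase δ) hcd x L hchain'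
      omega
    · obtain ⟨c, hc⟩ := card_eq_one.mp h1
      have hcT : c ∈ T := hc ▸ mem_singleton_self c
      obtain ⟨hc1L, _⟩ := (hTmem c).mp hcT
      have honly : ∀ t, t ∈ T → t = c := fun t htt => by
        rw [hc] at htt; exact mem_singleton.mp htt
      have hpre : c + 1 ≤ 2 ^ n := by
        apply ih (J.erase δ) hcd x (c + 1)
        intro t htc
        have htL : t + 1 < L := by omega
        refine ⟨(hchain t htL).1, mem_erase.mpr ⟨fun hh => ?_, (hchain t htL).2⟩⟩
        have := honly t ((hTmem t).mpr ⟨htL, hh⟩)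
        omega
      have hsuf : L - (c + 1) ≤ 2 ^ n := by
        apply ih (J.erase δ) hcd (fun t => x (c + 1 + t)) (L - (c + 1))
        intro t htc
        have h1 : c + 1 + t + 1 < L := by omega
        refine ⟨(hchain (c + 1 + t) h1).1, mem_erase.mpr ⟨fun hh => ?_, (hchain _ h1).2⟩⟩
        have := honly _ ((hTmem _).mpr ⟨h1, hh⟩)
        omega
      omega


lemma caught_empty {Q : Finset ℕ} (hQ : Q.Nonempty) : Caught Q ∅ := by
  refine ⟨fun _ => hQ.choose, fun t _ => hQ.choose_spec, fun t ht => ?_⟩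
  simp at ht

lemma countA : ∀ (N : ℕ) (Q : Finset ℕ), Q.card ≤ N → ∀ r : ℕ,
    (((range r).powerset).filter (Caught Q)).card ≤ Q.card := by
  intro N
  induction N with
  | zero =>
    intro Q hQN r
    have hQe : Q = ∅ := card_eq_zero.mp (by omega)
    have : ((range r).powerset).filter (Caught Q) = ∅ := by
      apply eq_empty_of_forall_notMem
      intro J hJ
      obtain ⟨x, hxQ, -⟩ := (mem_filter.mp hJ).2
      have := hxQ 0 (Nat.two_pow_pos _)
      rw [hQe] at this
      simp at this
    rw [this]
    simp
  | succ N ih =>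
    intro Q hQN r
    by_cases hQ2 : Q.card ≤ 1
    · rcases Q.eq_empty_or_nonempty with hQe | hQne
      · subst hQe
        have : ((range r).powerset).filter (Caught (∅ : Finset ℕ)) = ∅ := by
          apply eq_empty_of_forall_notMem
          intro J hJ
          obtain ⟨x, hxQ, -⟩ := (mem_filter.mp hJ).2
          have := hxQ 0 (Nat.two_pow_pos _)
          simp at this
        rw [this]; simp
      · have hsub : ((range r).powerset).filter (Caught Q) ⊆ {∅} := by
          intro J hJ
          obtain ⟨x, hxQ, hxc⟩ := (mem_filter.mp hJ).2
          rw [mem_singleton]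
          by_contra hne
          have hJ1 : 1 ≤ J.card := card_pos.mpr (nonempty_iff_ne_empty.mpr hne)
          have h2 : 2 ≤ 2 ^ J.card := by
            calc 2 = 2 ^ 1 := rfl
            _ ≤ 2 ^ J.card := Nat.pow_le_pow_right (by norm_num) hJ1
          have h01 : x 0 < x 1 := (hxc 0 (by omega)).1
          have hx0 := hxQ 0 (by omega)
          have hx1 := hxQ 1 (by omega)
          have := Finset.card_le_one.mp hQ2 _ hx0 _ hx1
          omega
        have := card_le_card hsub
        have hQ1 : 1 ≤ Q.card := card_pos.mpr hQne
        simp at this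
        omega
    · push_neg at hQ2
      have hQne : Q.Nonempty := card_pos.mp (by omega)
      set q0 := Q.min' hQne with hq0
      have hq0Q : q0 ∈ Q := Q.min'_mem hQne
      have himne : (Q.image fun z => dsz z q0).Nonempty := hQne.image _
      set d := (Q.image fun z => dsz z q0).max' himne with hd
      have hdle : ∀ z ∈ Q, dsz z q0 ≤ d := by
        intro z hz
        exact le_max' (Q.image fun z => dsz z q0) _ (mem_image_of_mem _ hz)
      have hdmem : ∃ z ∈ Q, dsz z q0 = d := by
        have := (Q.image fun z => dsz z q0).max'_mem himne
        rw [mem_image] at this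
        obtain ⟨z, hz, hzd⟩ := this
        exact ⟨z, hz, hzd⟩
      have hd1 : 1 ≤ d := by
        obtain ⟨z, hz, hzne⟩ := Finset.exists_mem_ne hQ2 q0
        have := dsz_pos hzne
        have := hdle z hz
        omega
      set A := Q.filter (fun z => dsz z q0 < d) with hA
      set B := Q.filter (fun z => ¬ dsz z q0 < d) with hB
      have hABcard : A.card + B.card = Q.card := card_filter_add_card_filter_not _
      have hq0A : q0 ∈ A := by
        rw [hA, mem_filter]
        refine ⟨hq0Q, ?_⟩
        unfold dsz
        rw [Nat.xor_self, Nat.size_zero]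
        omega
      have hBne : B.Nonempty := by
        obtain ⟨z, hz, hzd⟩ := hdmem
        exact ⟨z, by rw [hB, mem_filter]; exact ⟨hz, by omega⟩⟩
      have hAQ : A ⊆ Q := filter_subset _ _
      have hBQ : B ⊆ Q := filter_subset _ _
      have hAd : ∀ a ∈ A, dsz a q0 < d := fun a ha => (mem_filter.mp ha).2
      have hBd : ∀ b ∈ B, dsz b q0 = d := fun b hb =>
        le_antisymm (hdle b (mem_filter.mp hb).1) (not_lt.mp (mem_filter.mp hb).2)
      obtain ⟨j, hjd⟩ : ∃ j, d = j + 1 := ⟨d - 1, by omega⟩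
      have hAu : ∀ a ∈ A, a ^^^ q0 < 2 ^ j := by
        intro a ha
        have := hAd a ha
        exact Nat.size_le.mp (by unfold dsz at this; omega)
      have hBu1 : ∀ b ∈ B, 2 ^ j ≤ b ^^^ q0 := by
        intro b hb
        have := hBd b hb
        exact Nat.lt_size.mp (by unfold dsz at this; omega)
      have hBu2 : ∀ b ∈ B, b ^^^ q0 < 2 ^ (j + 1) := by
        intro b hb
        have := hBd b hb
        exact Nat.size_le.mp (by unfold dsz at this; omega)
      have hq0bit : q0.testBit j = false := by
        obtain ⟨b, hb⟩ := hBne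
        have h1 := hBu1 b hb
        have hbne : q0 ≠ b := by
          intro he
          rw [he, Nat.xor_self] at h1
          have := Nat.two_pow_pos j
          omega
        have hq0b : q0 < b := lt_of_le_of_ne (Q.min'_le b (hBQ hb)) hbne
        obtain ⟨j', hj', hbit, -, -⟩ := msb_spec hq0b
        have : dsz q0 b = d := by
          unfold dsz
          rw [Nat.xor_comm]
          exact hBd b hb
        have : j' = j := by omega
        rwa [this] at hbit
      have hbitA : ∀ a ∈ A, a.testBit j = false ∧ ∀ i, j ≤ i → a.testBit i = q0.testBit i := by
        intro a ha
        have := eq_testBit_of_xor_lt (hAu a ha)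
        exact ⟨(this j le_rfl).trans hq0bit, this⟩
      have hbitB : ∀ b ∈ B, b.testBit j = true ∧ ∀ i, j < i → b.testBit i = q0.testBit i := by
        intro b hb
        have habove : ∀ i, j < i → b.testBit i = q0.testBit i := fun i hi =>
          eq_testBit_of_xor_lt (hBu2 b hb) i hi
        have htb : (b ^^^ q0).testBit j = true := testBit_true_of_bounds (hBu1 b hb) (hBu2 b hb)
        rw [Nat.testBit_xor, hq0bit] at htb
        refine ⟨?_, habove⟩
        revert htb
        cases b.testBit j <;> simp
      have hAB_lt : ∀ a ∈ A, ∀ b ∈ B, a < b := by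
        intro a ha b hb
        apply Nat.lt_of_testBit j (hbitA a ha).1 (hbitB b hb).1
        intro i hi
        rw [(hbitA a ha).2 i (le_of_lt hi), (hbitB b hb).2 i hi]
      have hxor_split : ∀ z w : ℕ, z ^^^ w = (z ^^^ q0) ^^^ (w ^^^ q0) := by
        intro z w
        rw [Nat.xor_comm w q0]
        exact (xor_mid z q0 w).symm
      have hAB_dsz : ∀ a ∈ A, ∀ b ∈ B, dsz a b = d := by
        intro a ha b hb
        have hub : a ^^^ b < 2 ^ (j + 1) := by
          rw [hxor_split a b]
          exact Nat.xor_lt_two_pow (lt_trans (hAu a ha) (by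
            have := Nat.two_pow_pos j
            calc 2 ^ j < 2 ^ j + 2 ^ j := by omega
            _ = 2 ^ (j+1) := by rw [pow_succ]; ring)) (hBu2 b hb)
        have hlbbit : (a ^^^ b).testBit j = true := by
          rw [Nat.testBit_xor, (hbitA a ha).1, (hbitB b hb).1]
          rfl
        have hlb : 2 ^ j ≤ a ^^^ b := Nat.ge_two_pow_of_testBit hlbbit
        unfold dsz
        have h1 : (a ^^^ b).size ≤ j + 1 := Nat.size_le.mpr hub
        have h2 : j < (a ^^^ b).size := Nat.lt_size.mpr hlb
        omega
      have hAA : ∀ a ∈ A, ∀ a' ∈ A, dsz a a' < d := by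
        intro a ha a' ha'
        have : a ^^^ a' < 2 ^ j := by
          rw [hxor_split a a']
          exact Nat.xor_lt_two_pow (hAu a ha) (hAu a' ha')
        have := Nat.size_le.mpr this
        unfold dsz
        omega
      have hBB : ∀ b ∈ B, ∀ b' ∈ B, dsz b b' < d := by
        intro b hb b' hb'
        have hub : b ^^^ b' < 2 ^ (j + 1) := by
          rw [hxor_split b b']
          exact Nat.xor_lt_two_pow (hBu2 b hb) (hBu2 b' hb')
        have hbitf : (b ^^^ b').testBit j = false := by
          rw [Nat.testBit_xor, (hbitB b hb).1, (hbitB b' hb').1]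
          rfl
        have := Nat.size_le.mpr (lt_two_pow_of_testBit_false hub hbitf)
        unfold dsz
        omega
      have hsplit : ∀ J : Finset ℕ, Caught Q J →
          (d ∈ J ∧ Caught A (J.erase d) ∧ Caught B (J.erase d)) ∨
          (d ∉ J ∧ (Caught A J ∨ Caught B J)) := by
        rintro J ⟨x, hxQ, hxc⟩
        set L := 2 ^ J.card with hL
        have hL1 : 1 ≤ L := Nat.one_le_two_pow
        have hmono := chain_mono x L (fun t ht => (hxc t ht).1)
        have hAorB : ∀ t, t < L → x t ∈ A ∨ x t ∈ B := by
          intro t ht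
          by_cases hz : dsz (x t) q0 < d
          · exact Or.inl (mem_filter.mpr ⟨hxQ t ht, hz⟩)
          · exact Or.inr (mem_filter.mpr ⟨hxQ t ht, hz⟩)
        by_cases hex : ∃ t, t < L ∧ x t ∈ B
        · obtain ⟨hcL, hcB⟩ := Nat.find_spec hex
          set c := Nat.find hex with hc
          have hinA : ∀ t, t < c → x t ∈ A := by
            intro t ht
            rcases hAorB t (lt_trans ht hcL) with h | h
            · exact h
            · exact absurd ⟨lt_trans ht hcL, h⟩ (Nat.find_min hex ht)
          have hinB : ∀ t, c ≤ t → t < L → x t ∈ B := by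
            intro t hct htL
            rcases eq_or_lt_of_le hct with he | hlt
            · rw [← he]; exact hcB
            · rcases hAorB t htL with h | h
              · have h1 := hAB_lt _ h _ hcB
                have h2 := hmono c t hlt htL
                omega
              · exact h
          by_cases hdJ : d ∈ J
          · left
            refine ⟨hdJ, ?_⟩
            have hJ1 : 1 ≤ J.card := card_pos.mpr ⟨d, hdJ⟩
            have hcard' : (J.erase d).card = J.card - 1 := card_erase_of_mem hdJ
            have hpre : ∀ t, t + 1 < c → x t < x (t + 1) ∧ dsz (x t) (x (t + 1)) ∈ J.erase d := by
              intro t ht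
              have htL : t + 1 < L := by omega
              have h1 := hxc t htL
              refine ⟨h1.1, mem_erase.mpr ⟨?_, h1.2⟩⟩
              have := hAA _ (hinA t (by omega)) _ (hinA (t + 1) ht)
              omega
            have hc2 : c ≤ 2 ^ (J.card - 1) := ruler _ _ hcard' x c hpre
            have hsuf : ∀ t, t + 1 < L - c →
                x (c + t) < x (c + t + 1) ∧ dsz (x (c + t)) (x (c + t + 1)) ∈ J.erase d := by
              intro t ht
              have h1 : c + t + 1 < L := by omega
              have h2 := hxc (c + t) h1
              refine ⟨h2.1, mem_erase.mpr ⟨?_, h2.2⟩⟩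
              have := hBB _ (hinB (c + t) (by omega) (by omega)) _ (hinB (c + t + 1) (by omega) h1)
              omega
            have hLc2 : L - c ≤ 2 ^ (J.card - 1) := by
              apply ruler _ _ hcard' (fun t => x (c + t)) (L - c)
              intro t ht
              exact hsuf t ht
            have hLeq : L = 2 ^ (J.card - 1) + 2 ^ (J.card - 1) := by
              have h2 : 2 ^ J.card = 2 ^ (J.card - 1) * 2 := by
                rw [← pow_succ]
                congr 1
                omega
              rw [hL, h2]
              ring
            have hceq : c = 2 ^ (J.card - 1) := by omega
            constructor
            · refine ⟨x, ?_, ?_⟩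
              · intro t ht
                rw [hcard'] at ht
                exact hinA t (by omega)
              · intro t ht
                rw [hcard'] at ht
                exact hpre t (by omega)
            · refine ⟨fun t => x (c + t), ?_, ?_⟩
              · intro t ht
                rw [hcard'] at ht
                exact hinB (c + t) (by omega) (by omega)
              · intro t ht
                rw [hcard'] at ht
                exact hsuf t (by omega)
          · right
            refine ⟨hdJ, ?_⟩
            rcases Nat.eq_zero_or_pos c with hc0 | hcpos
            · right
              refine ⟨x, fun t ht => hinB t (by omega) ht, hxc⟩
            · exfalso
              have hcm1 : c - 1 + 1 < L := by omega
              have := (hxc (c - 1) hcm1).2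
              have heq : dsz (x (c - 1)) (x (c - 1 + 1)) = d := by
                apply hAB_dsz
                · exact hinA (c - 1) (by omega)
                · have : c - 1 + 1 = c := by omega
                  rw [this]
                  exact hcB
              rw [heq] at this
              exact hdJ this
        · push_neg at hex
          have hallA : ∀ t, t < L → x t ∈ A := by
            intro t ht
            rcases hAorB t ht with h | h
            · exact h
            · exact absurd h (hex t ht)
          by_cases hdJ : d ∈ J
          · exfalso
            have hJ1 : 1 ≤ J.card := card_pos.mpr ⟨d, hdJ⟩
            have hcard' : (J.erase d).card = J.card - 1 := card_erase_of_mem hdJ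
            have hchain' : ∀ t, t + 1 < L → x t < x (t + 1) ∧ dsz (x t) (x (t + 1)) ∈ J.erase d := by
              intro t ht
              have h1 := hxc t ht
              refine ⟨h1.1, mem_erase.mpr ⟨?_, h1.2⟩⟩
              have := hAA _ (hallA t (by omega)) _ (hallA (t + 1) ht)
              omega
            have := ruler _ _ hcard' x L hchain'
            have h2 : 2 ^ (J.card - 1) < 2 ^ J.card :=
              Nat.pow_lt_pow_right (by norm_num) (by omega)
            omega
          · exact Or.inr ⟨hdJ, Or.inl ⟨x, hallA, hxc⟩⟩
      -- counting
      set F := ((range r).powerset).filter (Caught Q) with hF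
      set FA := ((range r).powerset).filter (Caught A) with hFA
      set FB := ((range r).powerset).filter (Caught B) with hFB
      have hIHA : FA.card ≤ A.card := by
        apply ih A _ r
        have := card_pos.mpr hBne
        omega
      have hIHB : FB.card ≤ B.card := by
        apply ih B _ r
        have := card_pos.mpr ⟨q0, hq0A⟩
        omega
      have h1 : F.filter (fun J => ¬ d ∈ J) ⊆ FA ∪ FB := by
        intro J hJ
        rw [mem_filter] at hJ
        obtain ⟨hJF, hdJ⟩ := hJ
        rw [hF, mem_filter] at hJF
        obtain ⟨hJp, hJc⟩ := hJF
        rcases hsplit J hJc with ⟨hd, -, -⟩ | ⟨-, hor⟩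
        · exact absurd hd hdJ
        · rcases hor with h | h
          · exact mem_union_left _ (mem_filter.mpr ⟨hJp, h⟩)
          · exact mem_union_right _ (mem_filter.mpr ⟨hJp, h⟩)
      have h2 : (F.filter (fun J => d ∈ J)).card ≤ (FA ∩ FB).card := by
        apply card_le_card_of_injOn (fun J => J.erase d)
        · intro J hJ
          rw [mem_coe, mem_filter] at hJ
          obtain ⟨hJF, hdJ⟩ := hJ
          rw [hF, mem_filter] at hJF
          obtain ⟨hJp, hJc⟩ := hJF
          rcases hsplit J hJc with ⟨-, hcA, hcB⟩ | ⟨hnd, -⟩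
          · rw [mem_coe, mem_inter, mem_filter, mem_filter]
            have hsub : J.erase d ∈ (range r).powerset := by
              rw [mem_powerset] at hJp ⊢
              exact subset_trans (erase_subset d J) hJp
            exact ⟨⟨hsub, hcA⟩, ⟨hsub, hcB⟩⟩
          · exact absurd hdJ hnd
        · intro J hJ J' hJ' he
          simp only [Finset.coe_filter, Set.mem_setOf_eq] at hJ hJ'
          have h1 := insert_erase hJ.2
          have h2 := insert_erase hJ'.2
          rw [← h1, ← h2]
          exact congrArg (insert d) he
      have hFsplit : (F.filter (fun J => d ∈ J)).card + (F.filter (fun J => ¬ d ∈ J)).card = F.card :=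
        card_filter_add_card_filter_not _
      have hunion := card_union_add_card_inter FA FB
      have hcardle := card_le_card h1
      calc F.card = (F.filter (fun J => d ∈ J)).card + (F.filter (fun J => ¬ d ∈ J)).card := hFsplit.symm
        _ ≤ (FA ∩ FB).card + (FA ∪ FB).card := by omega
        _ = FA.card + FB.card := by omega
        _ ≤ A.card + B.card := by omega
        _ = Q.card := hABcard


lemma foldl_xor_shift : ∀ (l : List ℕ) (z : ℕ),
    l.foldl (fun a i => a ^^^ 2 ^ i) z = z ^^^ l.foldl (fun a i => a ^^^ 2 ^ i) 0 := by
  intro l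
  induction l with
  | nil => intro z; simp
  | cons i l ih =>
    intro z
    simp only [List.foldl_cons]
    rw [ih (z ^^^ 2 ^ i), ih (0 ^^^ 2 ^ i), Nat.zero_xor, Nat.xor_assoc]

lemma foldl_xor_testBit : ∀ (l : List ℕ), l.Nodup → ∀ j,
    (l.foldl (fun a i => a ^^^ 2 ^ i) 0).testBit j = decide (j ∈ l) := by
  intro l
  induction l with
  | nil => intro _ j; simp
  | cons i l ih =>
    intro hnd j
    simp only [List.foldl_cons, Nat.zero_xor]
    rw [foldl_xor_shift l (2 ^ i), Nat.testBit_xor, Nat.testBit_two_pow,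
      ih (List.Nodup.of_cons hnd) j]
    by_cases hij : i = j
    · subst hij
      have hniL : i ∉ l := (List.nodup_cons.mp hnd).1
      simp [hniL]
    · simp [hij, List.mem_cons, Ne.symm hij]

lemma foldl_xor_lt {m : ℕ} : ∀ (l : List ℕ), (∀ i ∈ l, i < m) →
    l.foldl (fun a i => a ^^^ 2 ^ i) 0 < 2 ^ m := by
  intro l
  induction l with
  | nil => intro _; simp
  | cons i l ih =>
    intro hb
    simp only [List.foldl_cons, Nat.zero_xor]
    rw [foldl_xor_shift l (2 ^ i)]
    refine Nat.xor_lt_two_pow ?_ (ih (fun i hi => hb i (List.mem_cons_of_mem _ hi)))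
    exact Nat.pow_lt_pow_right (by norm_num) (hb i List.mem_cons_self)

lemma step_mem {m : ℕ} (I : Finset ℕ) (hI : I ⊆ range m) {x y : ℕ} (hx : x < 2 ^ m)
    (hy : y < 2 ^ m) (hxy : x < y)
    (hlt : 2 ^ m - 1 - (I.sort (· ≤ ·)).foldl (fun a i => a ^^^ 2 ^ i) x
      < 2 ^ m - 1 - (I.sort (· ≤ ·)).foldl (fun a i => a ^^^ 2 ^ i) y) :
    dsz x y ∈ I.map ⟨fun i => i + 1, fun a b hab => by simpa using hab⟩ := by
  set l := I.sort (· ≤ ·) with hl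
  set S := l.foldl (fun a i => a ^^^ 2 ^ i) 0 with hS
  have hmem : ∀ i, i ∈ l ↔ i ∈ I := fun i => Finset.mem_sort _
  have hSbit : ∀ i, S.testBit i = decide (i ∈ I) := by
    intro i
    rw [hS, foldl_xor_testBit l (I.sort_nodup _) i]
    simp [hmem]
  have hSlt : S < 2 ^ m := by
    apply foldl_xor_lt
    intro i hi
    have := hI ((hmem i).mp hi)
    simpa [mem_range] using this
  have hfx : l.foldl (fun a i => a ^^^ 2 ^ i) x = x ^^^ S := foldl_xor_shift l x
  have hfy : l.foldl (fun a i => a ^^^ 2 ^ i) y = y ^^^ S := foldl_xor_shift l y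
  rw [hfx, hfy] at hlt
  have hxS : x ^^^ S < 2 ^ m := Nat.xor_lt_two_pow hx hSlt
  have hyS : y ^^^ S < 2 ^ m := Nat.xor_lt_two_pow hy hSlt
  have hyx : y ^^^ S < x ^^^ S := by
    have h1 : (1:ℕ) ≤ 2 ^ m := Nat.one_le_two_pow
    omega
  obtain ⟨j, hj, hbx, hby, habove⟩ := msb_spec hxy
  have hjI : j ∈ I := by
    by_contra hjn
    have hSj : S.testBit j = false := by rw [hSbit j]; simp [hjn]
    have hxb : (x ^^^ S).testBit j = false := by
      rw [Nat.testBit_xor, hbx, hSj]; rfl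
    have hyb : (y ^^^ S).testBit j = true := by
      rw [Nat.testBit_xor, hby, hSj]; rfl
    have : x ^^^ S < y ^^^ S := by
      apply Nat.lt_of_testBit j hxb hyb
      intro i hi
      rw [Nat.testBit_xor, Nat.testBit_xor, habove i hi]
    omega
  rw [mem_map]
  exact ⟨j, hjI, by show j + 1 = dsz x y; omega⟩

end Stmt19Aux

open Stmt19Aux

/-- Yao-style lower bound core. -/
theorem stmt19 (p : ℝ) (hp0 : 0 < p) (hp1 : p < 1) (m h : ℕ) (hh1 : 1 ≤ h) (hhm : h ≤ m)
    (Q : Finset ℕ) (hQ : Q ⊆ Finset.range (2 ^ m))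
    (hQcard : (Q.card : ℝ) ≤ p * (m.choose h)) :
    ((((Finset.range m).powersetCard h).filter (fun I =>
        ∃ x : ℕ → ℕ, (∀ t < 2 ^ h, x t ∈ Q) ∧
          (∀ t, t + 1 < 2 ^ h → x t < x (t + 1)) ∧
          (∀ t, t + 1 < 2 ^ h →
            2 ^ m - 1 - (I.sort (· ≤ ·)).foldl (fun a i => a ^^^ 2 ^ i) (x t)
              < 2 ^ m - 1 - (I.sort (· ≤ ·)).foldl (fun a i => a ^^^ 2 ^ i) (x (t + 1))))).card : ℝ)
      < p * (m.choose h) := by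
  have hC : (0:ℝ) < (m.choose h : ℝ) := by
    exact_mod_cast Nat.choose_pos hhm
  set F₀ := (((Finset.range m).powersetCard h).filter (fun I =>
        ∃ x : ℕ → ℕ, (∀ t < 2 ^ h, x t ∈ Q) ∧
          (∀ t, t + 1 < 2 ^ h → x t < x (t + 1)) ∧
          (∀ t, t + 1 < 2 ^ h →
            2 ^ m - 1 - (I.sort (· ≤ ·)).foldl (fun a i => a ^^^ 2 ^ i) (x t)
              < 2 ^ m - 1 - (I.sort (· ≤ ·)).foldl (fun a i => a ^^^ 2 ^ i) (x (t + 1))))) with hF₀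
  rcases Q.eq_empty_or_nonempty with hQe | hQne
  · have hFe : F₀ = ∅ := by
      apply Finset.eq_empty_of_forall_notMem
      intro I hI
      obtain ⟨x, hxQ, -, -⟩ := (Finset.mem_filter.mp hI).2
      have := hxQ 0 (Nat.two_pow_pos _)
      rw [hQe] at this
      simp at this
    rw [hFe]
    simpa using mul_pos hp0 hC
  · set e : ℕ ↪ ℕ := ⟨fun i => i + 1, fun a b hab => by simpa using hab⟩ with he
    set G := ((Finset.range (m + 1)).powerset).filter (Caught Q) with hG
    have hGQ : G.card ≤ Q.card := countA Q.card Q le_rfl (m + 1)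
    have hempty : ∅ ∈ G := by
      rw [hG, Finset.mem_filter]
      exact ⟨Finset.empty_mem_powerset _, caught_empty hQne⟩
    have hmap : ∀ I ∈ F₀, I.map e ∈ G.erase ∅ := by
      intro I hI
      rw [Finset.mem_filter] at hI
      obtain ⟨hIp, x, hxQ, hxinc, hxlt⟩ := hI
      rw [Finset.mem_powersetCard] at hIp
      obtain ⟨hIsub, hIcard⟩ := hIp
      have hIne : I.Nonempty := Finset.card_pos.mp (by omega)
      rw [Finset.mem_erase]
      constructor
      · intro hc
        obtain ⟨a, ha⟩ := hIne
        have : e a ∈ I.map e := Finset.mem_map_of_mem e ha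
        rw [hc] at this
        simp at this
      · rw [hG, Finset.mem_filter]
        constructor
        · rw [Finset.mem_powerset]
          intro b hb
          rw [Finset.mem_map] at hb
          obtain ⟨a, ha, hab⟩ := hb
          have := Finset.mem_range.mp (hIsub ha)
          rw [Finset.mem_range, ← hab]
          show a + 1 < m + 1
          omega
        · refine ⟨x, ?_, ?_⟩
          · rw [Finset.card_map, hIcard]
            exact hxQ
          · rw [Finset.card_map, hIcard]
            intro t ht
            refine ⟨hxinc t ht, ?_⟩
            apply step_mem I hIsub
            · exact Finset.mem_range.mp (hQ (hxQ t (by omega)))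
            · exact Finset.mem_range.mp (hQ (hxQ (t + 1) (by omega)))
            · exact hxinc t ht
            · exact hxlt t ht
    have hinj : Set.InjOn (fun I => Finset.map e I) ↑F₀ :=
      fun I _ I' _ hII => Finset.map_injective e hII
    have hcard1 : F₀.card ≤ (G.erase ∅).card :=
      Finset.card_le_card_of_injOn _ hmap hinj
    have hcard2 : (G.erase ∅).card = G.card - 1 := Finset.card_erase_of_mem hempty
    have hG1 : 1 ≤ G.card := Finset.card_pos.mpr ⟨∅, hempty⟩
    have hQ1 : 1 ≤ Q.card := Finset.card_pos.mpr hQne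
    have hle : F₀.card + 1 ≤ Q.card := by omega
    have hcast : (F₀.card : ℝ) + 1 ≤ (Q.card : ℝ) := by exact_mod_cast hle
    linarith
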